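/- Let α ∈ ℂ with 0 < Re(α) < 1, let ξ ∈ ℝⁿ with 1/10 ≤ |ξ| ≤ 10, and let τ ∈ ℝ with |τ| ≠ |ξ|. Then for each j ∈ ℤ, |∫_{2^{j-1}}^{2^j} e^{2πi(|ξ|-τ)r} |rξ|^{-α} r^{2α-1} dr| ≤ B·e^{c|Im α|}·2^{j·Re α} if 2^j ≤ ||τ|-|ξ||^{-1}, and ≤ B·e^{c|Im α|}·||τ|-|ξ||^{-1}·2^{j(Re α - 1)} if 2^j > ||τ|-|ξ||^{-1}, where B depends only on Re α and c > 0 is an absolute constant. -/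

import Mathlib

open Real Complex intervalIntegral

private lemma aux2 (a : ℝ) (ha : 0 < a) (ha1 : a < 1) (α : ℂ) (hre : α.re = a)
    (ν : ℝ) (hν1 : 1 / 10 ≤ ν) (hν2 : ν ≤ 10) (τ : ℝ) (hτ : |τ| ≠ ν) (j : ℤ) :
    (‖∫ r in ((2:ℝ) ^ (j - 1))..((2:ℝ) ^ j),
          Complex.exp (2 * π * Complex.I * ((ν : ℂ) - τ) * r) *
            ((r * ν : ℝ) : ℂ) ^ (-α) * (r : ℂ) ^ (2 * α - 1)‖
        ≤ 100 * Real.exp (1 * |α.im|) * (2:ℝ) ^ ((j : ℝ) * a)) ∧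
    (‖∫ r in ((2:ℝ) ^ (j - 1))..((2:ℝ) ^ j),
          Complex.exp (2 * π * Complex.I * ((ν : ℂ) - τ) * r) *
            ((r * ν : ℝ) : ℂ) ^ (-α) * (r : ℂ) ^ (2 * α - 1)‖
        ≤ 100 * Real.exp (1 * |α.im|) * |(|τ| - ν)|⁻¹ * (2:ℝ) ^ ((j : ℝ) * (a - 1))) := by
  have hν0 : (0:ℝ) < ν := lt_of_lt_of_le (by norm_num) hν1
  set s : ℝ := (2:ℝ) ^ (j - 1) with hsdef
  set t : ℝ := (2:ℝ) ^ j with htdef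
  have hs : 0 < s := zpow_pos (by norm_num) _
  have ht : 0 < t := zpow_pos (by norm_num) _
  have hst2 : s = t / 2 := by
    rw [hsdef, htdef, zpow_sub_one₀ (two_ne_zero)]; ring
  have hst : s < t := by rw [hst2]; linarith
  have hts : t - s = s := by rw [hst2]; ring
  set d : ℝ := |(|τ| - ν)| with hddef
  have hd : 0 < d := abs_pos.2 (sub_ne_zero.2 hτ)
  have hdk : d ≤ |ν - τ| := by
    calc d = |(|τ| - |ν|)| := by rw [hddef, abs_of_pos hν0]
      _ ≤ |τ - ν| := abs_abs_sub_abs_le_abs_sub τ ν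
      _ = |ν - τ| := abs_sub_comm τ ν
  have hnt : ν - τ ≠ 0 := by
    intro h
    rw [h, abs_zero] at hdk; linarith
  -- rewrite the integral
  have heq : (∫ r in s..t,
        Complex.exp (2 * π * Complex.I * ((ν : ℂ) - τ) * r) *
          ((r * ν : ℝ) : ℂ) ^ (-α) * (r : ℂ) ^ (2 * α - 1))
      = ((ν:ℂ)) ^ (-α) * ∫ r in s..t,
        Complex.exp (2 * π * Complex.I * ((ν : ℂ) - τ) * r) * (r : ℂ) ^ (α - 1) := by
    rw [← intervalIntegral.integral_const_mul]
    refine intervalIntegral.integral_congr fun r hr => ?_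
    rw [Set.uIcc_of_le hst.le] at hr
    have hr0 : 0 < r := lt_of_lt_of_le hs hr.1
    push_cast
    rw [Complex.mul_cpow_ofReal_nonneg hr0.le hν0.le,
      show α - 1 = -α + (2*α - 1) by ring,
      Complex.cpow_add _ _ (Complex.ofReal_ne_zero.2 hr0.ne')]
    ring
  have hGnorm : ∀ r : ℝ, 0 < r →
      ‖Complex.exp (2 * π * Complex.I * ((ν : ℂ) - τ) * r) * (r : ℂ) ^ (α - 1)‖
        = r ^ (a - 1) := by
    intro r hr0
    rw [norm_mul]
    have h1 : ‖Complex.exp (2 * π * Complex.I * ((ν : ℂ) - τ) * r)‖ = 1 := by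
      rw [show (2 * π * Complex.I * ((ν:ℂ) - (τ:ℂ)) * (r:ℂ))
          = ((2 * π * (ν - τ) * r : ℝ) : ℂ) * Complex.I by push_cast; ring,
        Complex.norm_exp_ofReal_mul_I]
    have h2 : ‖(r:ℂ) ^ (α - 1)‖ = r ^ (a - 1) := by
      rw [Complex.norm_cpow_eq_rpow_re_of_pos hr0]
      norm_num [hre]
    rw [h1, h2, one_mul]
  have hν10 : ν ^ (-a) ≤ 10 := by
    have h1 : ν ^ (-a) ≤ ((1:ℝ)/10) ^ (-a) :=
      Real.rpow_le_rpow_of_nonpos (by norm_num) hν1 (by linarith)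
    have h2 : ((1:ℝ)/10) ^ (-a) = (10:ℝ) ^ a := by
      rw [show (1:ℝ)/10 = (10:ℝ)⁻¹ by norm_num, Real.inv_rpow (by norm_num),
        ← Real.rpow_neg (by norm_num), neg_neg]
    have h3 : (10:ℝ) ^ a ≤ (10:ℝ) ^ (1:ℝ) :=
      Real.rpow_le_rpow_of_exponent_le (by norm_num) ha1.le
    rw [Real.rpow_one] at h3
    linarith [h1, h2 ▸ h1]
  have hNorm : ‖∫ r in s..t,
        Complex.exp (2 * π * Complex.I * ((ν : ℂ) - τ) * r) *
          ((r * ν : ℝ) : ℂ) ^ (-α) * (r : ℂ) ^ (2 * α - 1)‖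
      = ν ^ (-a) * ‖∫ r in s..t,
        Complex.exp (2 * π * Complex.I * ((ν : ℂ) - τ) * r) * (r : ℂ) ^ (α - 1)‖ := by
    rw [heq, norm_mul, Complex.norm_cpow_eq_rpow_re_of_pos hν0]
    norm_num [hre]
  have hexp1 : (1:ℝ) ≤ Real.exp (1 * |α.im|) :=
    Real.one_le_exp (by positivity)
  have hsr : s = (2:ℝ) ^ ((j:ℝ) - 1) := by
    rw [hsdef, ← Real.rpow_intCast]; norm_num
  set J := ∫ r in s..t,
      Complex.exp (2 * π * Complex.I * ((ν : ℂ) - τ) * r) * (r : ℂ) ^ (α - 1) with hJdef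
  constructor
  · -- case 1: trivial bound
    have hb : ∀ r ∈ Set.uIoc s t,
        ‖Complex.exp (2 * π * Complex.I * ((ν : ℂ) - τ) * r) * (r : ℂ) ^ (α - 1)‖
          ≤ s ^ (a - 1) := by
      intro r hr
      rw [Set.uIoc_of_le hst.le] at hr
      rw [hGnorm r (hs.trans hr.1)]
      exact Real.rpow_le_rpow_of_nonpos hs hr.1.le (by linarith)
    have hJb : ‖J‖ ≤ s ^ (a - 1) * |t - s| :=
      intervalIntegral.norm_integral_le_of_norm_le_const hb
    rw [hts, abs_of_pos hs] at hJb
    have hss : s ^ (a - 1) * s = s ^ a := by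
      rw [← Real.rpow_add_one hs.ne' (a - 1)]; norm_num
    rw [hss] at hJb
    have hsa : s ^ a ≤ (2:ℝ) ^ ((j:ℝ) * a) := by
      rw [hsr, ← Real.rpow_mul (by norm_num : (0:ℝ) ≤ 2)]
      apply Real.rpow_le_rpow_of_exponent_le one_le_two
      nlinarith
    rw [hNorm]
    have hX : (0:ℝ) < (2:ℝ) ^ ((j:ℝ) * a) := Real.rpow_pos_of_pos (by norm_num) _
    have hJ0 : 0 ≤ ‖J‖ := norm_nonneg _
    have hνa0 : 0 ≤ ν ^ (-a) := Real.rpow_nonneg hν0.le _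
    nlinarith [mul_le_mul hν10 (hJb.trans hsa) hJ0 (by norm_num : (0:ℝ) ≤ 10)]
  · -- case 2: integration by parts
    set k : ℂ := 2 * π * Complex.I * ((ν:ℂ) - (τ:ℂ)) with hkdef
    have hkeq : k = (((2 * π * (ν - τ)):ℝ):ℂ) * Complex.I := by rw [hkdef]; push_cast; ring
    have hkabs : ‖k‖ = 2 * π * |ν - τ| := by
      rw [hkeq, norm_mul, Complex.norm_real, Real.norm_eq_abs,
        Complex.norm_I, mul_one, abs_mul, abs_mul, abs_of_pos Real.pi_pos,
        abs_of_pos (by norm_num : (0:ℝ) < 2)]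
    have hk0 : k ≠ 0 := by
      intro h
      rw [h, norm_zero] at hkabs
      have : 0 < 2 * π * |ν - τ| := by positivity
      linarith
    have hα1 : α - 1 ≠ 0 := by
      intro h
      have := congrArg Complex.re h
      simp [hre] at this
      linarith
    have hα2 : α - 2 ≠ -1 := by
      intro h
      have := congrArg Complex.re h
      simp [hre] at this
      linarith
    set u : ℝ → ℂ := fun r => (r:ℂ) ^ (α - 1) with hudef
    set u' : ℝ → ℂ := fun r => (α - 1) * (r:ℂ) ^ (α - 2) with hu'def
    set v : ℝ → ℂ := fun r => Complex.exp (k * r) / k with hvdef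
    set v' : ℝ → ℂ := fun r => Complex.exp (k * r) with hv'def
    have hu : ∀ r ∈ Set.uIcc s t, HasDerivAt u (u' r) r := by
      intro r hr
      rw [Set.uIcc_of_le hst.le] at hr
      have hr0 : 0 < r := lt_of_lt_of_le hs hr.1
      have h := (hasDerivAt_ofReal_cpow_const' hr0.ne' hα2).const_mul (α - 1)
      have hfun : (fun y : ℝ => (α - 1) * ((y:ℂ) ^ (α - 2 + 1) / (α - 2 + 1)))
          = fun y : ℝ => (y:ℂ) ^ (α - 1) := by
        funext y
        rw [show α - 2 + 1 = α - 1 by ring]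
        field_simp
      rw [hfun] at h
      exact h
    have hv : ∀ r ∈ Set.uIcc s t, HasDerivAt v (v' r) r := by
      intro r _
      have h1 : HasDerivAt (fun z : ℂ => Complex.exp (k * z)) (Complex.exp (k * (r:ℂ)) * k) (r:ℂ) := by
        simpa using ((hasDerivAt_id (r:ℂ)).const_mul k).cexp
      have h2 := (h1.div_const k).comp_ofReal
      simpa [hvdef, hv'def, mul_div_cancel_right₀ _ hk0] using h2
    have hu'i : IntervalIntegrable u' MeasureTheory.volume s t := by
      apply ContinuousOn.intervalIntegrable
      apply continuousOn_const.mul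
      intro r hr
      rw [Set.uIcc_of_le hst.le] at hr
      have hr0 : 0 < r := lt_of_lt_of_le hs hr.1
      exact (Complex.continuousAt_ofReal_cpow_const r (α - 2) (Or.inr hr0.ne')).continuousWithinAt
    have hv'i : IntervalIntegrable v' MeasureTheory.volume s t :=
      (Complex.continuous_exp.comp (continuous_const.mul Complex.continuous_ofReal)).intervalIntegrable s t
    have hIBP := intervalIntegral.integral_mul_deriv_eq_deriv_mul hu hv hu'i hv'i
    have hJeq : J = ∫ r in s..t, u r * v' r :=
      intervalIntegral.integral_congr fun r _ => mul_comm _ _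
    -- norm estimates
    have hvnorm : ∀ r : ℝ, ‖v r‖ ≤ (2 * π * d)⁻¹ := by
      intro r
      have he : ‖Complex.exp (k * r)‖ = 1 := by
        rw [show k * (r:ℂ) = ((2 * π * (ν - τ) * r : ℝ):ℂ) * Complex.I by rw [hkdef]; push_cast; ring,
          Complex.norm_exp_ofReal_mul_I]
      rw [hvdef]
      simp only [norm_div, he, hkabs]
      rw [one_div]
      apply inv_anti₀ (by positivity)
      nlinarith [Real.pi_gt_three, hdk, hd]
    have hunorm : ∀ r : ℝ, 0 < r → ‖u r‖ = r ^ (a - 1) := by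
      intro r hr0
      rw [hudef]
      simp only [Complex.norm_cpow_eq_rpow_re_of_pos hr0]
      norm_num [hre]
    have halpha : ‖α - 1‖ ≤ 1 + |α.im| := by
      calc ‖α - 1‖ ≤ |(α - 1).re| + |(α - 1).im| := Complex.norm_le_abs_re_add_abs_im _
        _ ≤ 1 + |α.im| := by
          simp only [Complex.sub_re, Complex.one_re, Complex.sub_im, Complex.one_im, hre, sub_zero]
          have : |a - 1| ≤ 1 := by rw [abs_of_nonpos (by linarith)]; linarith
          linarith
    have hts' : t ^ (a - 1) ≤ s ^ (a - 1) :=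
      Real.rpow_le_rpow_of_nonpos hs hst.le (by linarith)
    have hbound1 : ‖u t * v t‖ ≤ s ^ (a - 1) * (2 * π * d)⁻¹ := by
      rw [norm_mul, hunorm t ht]
      exact mul_le_mul hts' (hvnorm t) (norm_nonneg _) (Real.rpow_nonneg hs.le _)
    have hbound2 : ‖u s * v s‖ ≤ s ^ (a - 1) * (2 * π * d)⁻¹ := by
      rw [norm_mul, hunorm s hs]
      exact mul_le_mul_of_nonneg_left (hvnorm s) (Real.rpow_nonneg hs.le _)
    have hbound3 : ‖∫ r in s..t, u' r * v r‖
        ≤ (‖α - 1‖ * s ^ (a - 2) * (2 * π * d)⁻¹) * |t - s| := by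
      apply intervalIntegral.norm_integral_le_of_norm_le_const
      intro r hr
      rw [Set.uIoc_of_le hst.le] at hr
      have hr0 : 0 < r := hs.trans hr.1
      rw [norm_mul, hu'def]
      simp only [norm_mul, Complex.norm_cpow_eq_rpow_re_of_pos hr0]
      have h1 : r ^ (α - 2).re ≤ s ^ (a - 2) := by
        rw [show (α - 2).re = a - 2 by simp [hre]]
        exact Real.rpow_le_rpow_of_nonpos hs hr.1.le (by linarith)
      have h2 := hvnorm r
      have h3 : (0:ℝ) ≤ ‖α - 1‖ := norm_nonneg _
      have h4 : (0:ℝ) ≤ r ^ (α - 2).re := Real.rpow_nonneg hr0.le _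
      have h5 : (0:ℝ) ≤ ‖v r‖ := norm_nonneg _
      calc ‖α - 1‖ * r ^ (α - 2).re * ‖v r‖
          ≤ ‖α - 1‖ * s ^ (a - 2) * ‖v r‖ := by
            apply mul_le_mul_of_nonneg_right (mul_le_mul_of_nonneg_left h1 h3) h5
        _ ≤ ‖α - 1‖ * s ^ (a - 2) * (2 * π * d)⁻¹ := by
            apply mul_le_mul_of_nonneg_left h2
            positivity
        _ = ‖α - 1‖ * s ^ (a - 2) * (2 * π * d)⁻¹ := by rfl
    have hJbound : ‖J‖ ≤ (2 + ‖α - 1‖) * s ^ (a - 1) * (2 * π * d)⁻¹ := by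
      rw [hJeq, hIBP]
      have hss2 : s ^ (a - 2) * s = s ^ (a - 1) := by
        rw [← Real.rpow_add_one hs.ne' (a - 2)]
        congr 1
        ring
      rw [hts, abs_of_pos hs] at hbound3
      calc ‖u t * v t - u s * v s - ∫ r in s..t, u' r * v r‖
          ≤ ‖u t * v t - u s * v s‖ + ‖∫ r in s..t, u' r * v r‖ := norm_sub_le _ _
        _ ≤ (‖u t * v t‖ + ‖u s * v s‖) + ‖∫ r in s..t, u' r * v r‖ := by
            have := norm_sub_le (u t * v t) (u s * v s); linarith
        _ ≤ (s ^ (a - 1) * (2 * π * d)⁻¹ + s ^ (a - 1) * (2 * π * d)⁻¹)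
              + (‖α - 1‖ * s ^ (a - 2) * (2 * π * d)⁻¹) * s := by
            linarith [hbound1, hbound2, hbound3]
        _ = (2 + ‖α - 1‖) * s ^ (a - 1) * (2 * π * d)⁻¹ := by
            rw [show (‖α - 1‖ * s ^ (a - 2) * (2 * π * d)⁻¹) * s
                = ‖α - 1‖ * (s ^ (a - 2) * s) * (2 * π * d)⁻¹ by ring, hss2]
            ring
    -- final numeric assembly
    rw [hNorm]
    set E := Real.exp (1 * |α.im|) with hEdef
    have hE : (1:ℝ) ≤ E := hexp1
    have hE0 : (0:ℝ) < E := lt_of_lt_of_le one_pos hE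
    set X := (2:ℝ) ^ ((j:ℝ) * (a - 1)) with hXdef
    have hX : (0:ℝ) < X := Real.rpow_pos_of_pos (by norm_num) _
    have hfac1 : 2 + ‖α - 1‖ ≤ 3 * E := by
      have := Real.add_one_le_exp |α.im|
      have h0 := abs_nonneg α.im
      rw [hEdef, one_mul]
      linarith [halpha]
    have hfac2 : s ^ (a - 1) ≤ 2 * X := by
      have h1 : s ^ (a - 1) = (2:ℝ) ^ (((j:ℝ) - 1) * (a - 1)) := by
        rw [hsr]
        exact (Real.rpow_mul (by norm_num) _ _).symm
      have h2 : (2:ℝ) ^ (((j:ℝ) - 1) * (a - 1)) = X * (2:ℝ) ^ (1 - a) := by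
        rw [hXdef, ← Real.rpow_add (by norm_num)]
        congr 1
        ring
      have h3 : (2:ℝ) ^ (1 - a) ≤ 2 := by
        calc (2:ℝ) ^ (1 - a) ≤ (2:ℝ) ^ (1:ℝ) :=
              Real.rpow_le_rpow_of_exponent_le one_le_two (by linarith)
          _ = 2 := Real.rpow_one 2
      rw [h1, h2]
      calc X * (2:ℝ) ^ (1 - a) ≤ X * 2 := mul_le_mul_of_nonneg_left h3 hX.le
        _ = 2 * X := mul_comm _ _
    have hfac3 : (2 * π * d)⁻¹ ≤ d⁻¹ := by
      apply inv_anti₀ hd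
      have h1 : (1:ℝ) ≤ 2 * π := by linarith [Real.pi_gt_three]
      calc d = 1 * d := (one_mul d).symm
        _ ≤ 2 * π * d := mul_le_mul_of_nonneg_right h1 hd.le
    have hνa0 : 0 ≤ ν ^ (-a) := Real.rpow_nonneg hν0.le _
    have hinv0 : (0:ℝ) < (2 * π * d)⁻¹ := by positivity
    have hs0 : (0:ℝ) ≤ s ^ (a - 1) := Real.rpow_nonneg hs.le _
    have hd0 : (0:ℝ) < d⁻¹ := by positivity
    calc ν ^ (-a) * ‖J‖ ≤ 10 * ((2 + ‖α - 1‖) * s ^ (a - 1) * (2 * π * d)⁻¹) := by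
          apply mul_le_mul hν10 hJbound (norm_nonneg _)
          norm_num
      _ ≤ 10 * ((3 * E) * (2 * X) * d⁻¹) := by
          apply mul_le_mul_of_nonneg_left _ (by norm_num)
          apply mul_le_mul _ hfac3 hinv0.le (by positivity)
          apply mul_le_mul hfac1 hfac2 hs0 (by positivity)
      _ = 60 * E * X * d⁻¹ := by ring
      _ = 60 * (E * X * d⁻¹) := by ring
      _ ≤ 100 * (E * X * d⁻¹) := by
          apply mul_le_mul_of_nonneg_right (by norm_num)
          positivity
      _ = 100 * E * d⁻¹ * X := by ring

theorem stmt_2 :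
    ∃ c > (0:ℝ), ∀ a : ℝ, 0 < a → a < 1 → ∃ B > (0:ℝ),
      ∀ (n : ℕ) (α : ℂ), α.re = a →
      ∀ ξ : EuclideanSpace ℝ (Fin n), 1 / 10 ≤ ‖ξ‖ → ‖ξ‖ ≤ 10 →
      ∀ τ : ℝ, |τ| ≠ ‖ξ‖ →
      ∀ j : ℤ,
        ((2:ℝ) ^ j ≤ |(|τ| - ‖ξ‖)|⁻¹ →
          ‖∫ r in ((2:ℝ) ^ (j - 1))..((2:ℝ) ^ j),
              Complex.exp (2 * π * Complex.I * ((‖ξ‖ : ℂ) - τ) * r) *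
                ((r * ‖ξ‖ : ℝ) : ℂ) ^ (-α) * (r : ℂ) ^ (2 * α - 1)‖
            ≤ B * Real.exp (c * |α.im|) * (2:ℝ) ^ ((j : ℝ) * a)) ∧
        (|(|τ| - ‖ξ‖)|⁻¹ < (2:ℝ) ^ j →
          ‖∫ r in ((2:ℝ) ^ (j - 1))..((2:ℝ) ^ j),
              Complex.exp (2 * π * Complex.I * ((‖ξ‖ : ℂ) - τ) * r) *
                ((r * ‖ξ‖ : ℝ) : ℂ) ^ (-α) * (r : ℂ) ^ (2 * α - 1)‖
            ≤ B * Real.exp (c * |α.im|) * |(|τ| - ‖ξ‖)|⁻¹ * (2:ℝ) ^ ((j : ℝ) * (a - 1))) := by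
  refine ⟨1, one_pos, fun a ha ha1 => ⟨100, by norm_num, fun n α hre ξ hξ1 hξ2 τ hτ j => ?_⟩⟩
  have h := aux2 a ha ha1 α hre ‖ξ‖ hξ1 hξ2 τ hτ j
  exact ⟨fun _ => h.1, fun _ => h.2⟩
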